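/- arXiv:2005.08038 — 2 statements merged into one kernel-verified Lean document; each statement's English description precedes it below -/
import Mathlib

section
/- Let n ≥ 13 and let i be an integer with 0 ≤ i ≤ n−1. In the graph P(n,3), d(v_0, e_i^u) = min(q_i + ⌊r_i/2⌋ + 1, q_n − q_i + ⌊r_n/2⌋ − ⌊r_i/2⌋ + 1) if r_i = 0 or (r_n, r_i) = (0,2), and d(v_0, e_i^u) = min(q_i + 2, q_n − q_i + 1) otherwise. -/
open SimpleGraph

/-- The vertex set of the generalized Petersen graph: two disjoint copies of `ZMod n`. -/
abbrev GPVert (n : ℕ) := ZMod n ⊕ ZMod n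

/-- The outer vertices `u_j`. -/
def pu {n : ℕ} (j : ZMod n) : GPVert n := Sum.inl j

/-- The inner vertices `v_j`. -/
def pv {n : ℕ} (j : ZMod n) : GPVert n := Sum.inr j

/-- The generalized Petersen graph `P(n,k)`, with edges
`u_j u_{j+1}`, `v_j v_{j+k}`, and `u_j v_j` for all `j`. -/
def GP (n k : ℕ) : SimpleGraph (GPVert n) :=
  SimpleGraph.fromRel fun a b =>
    (∃ j : ZMod n, a = pu j ∧ b = pu (j + 1)) ∨
    (∃ j : ZMod n, a = pv j ∧ b = pv (j + (k : ZMod n))) ∨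
    (∃ j : ZMod n, a = pu j ∧ b = pv j)

/-- The distance from a vertex to an (unordered) edge:
`d(x, yz) = min (d x y) (d x z)`. -/
noncomputable def edist {V : Type*} (G : SimpleGraph V) (x : V) (e : Sym2 V) : ℕ :=
  Sym2.lift ⟨fun a b => min (G.dist x a) (G.dist x b), fun a b => min_comm (G.dist x a) (G.dist x b)⟩ e

/-- `S` is an edge resolving set of `G` if any two distinct edges of `G`
are distinguished by their distance to some vertex of `S`. -/
def IsEdgeResolving {V : Type*} (G : SimpleGraph V) (S : Set V) : Prop :=
  ∀ e ∈ G.edgeSet, ∀ e' ∈ G.edgeSet, e ≠ e' → ∃ x ∈ S, edist G x e ≠ edist G x e'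

/-- `q_m`: the quotient of `m` upon division by 3. -/
def q3 (m : ℕ) : ℤ := (m : ℤ) / 3

/-- `r_m`: the residue of `m` modulo 3. -/
def r3 (m : ℕ) : ℤ := (m : ℤ) % 3

/-! ### Auxiliary machinery -/

set_option maxHeartbeats 4000000

/-- forward distance profile to outer vertex `u_m`. -/
def fU (m : ℕ) : ℕ := m / 3 + m % 3 + 1

/-- forward distance profile to inner vertex `v_m`. -/
def fV (m : ℕ) : ℕ := m / 3 + m % 3 + 2 * ((m % 3 + 2) / 3)

/-- candidate distance function from `v₀`. -/
def DD (n : ℕ) : GPVert n → ℕ :=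
  Sum.elim (fun j => min (fU j.val) (fU (n - j.val))) (fun j => min (fV j.val) (fV (n - j.val)))

lemma flat3 (e : ℕ) : ∃ q r, e / 3 = q ∧ e % 3 = r ∧ e = 3 * q + r ∧ r < 3 :=
  ⟨e / 3, e % 3, rfl, rfl, (Nat.div_add_mod e 3).symm, Nat.mod_lt _ (by norm_num)⟩

lemma walk_lower {V : Type*} (G : SimpleGraph V) (D : V → ℕ)
    (hlip : ∀ a b, G.Adj a b → D b ≤ D a + 1) :
    ∀ {a b : V} (w : G.Walk a b), D b ≤ D a + w.length := by
  intro a b w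
  induction w with
  | nil => simp
  | @cons u v w h p ih =>
      have := hlip _ _ h
      simp only [SimpleGraph.Walk.length_cons]
      omega

lemma dist_eq_of {V : Type*} (G : SimpleGraph V) (v : V) (D : V → ℕ)
    (h0 : D v = 0) (hv0 : ∀ x, D x = 0 → x = v)
    (hlip : ∀ a b, G.Adj a b → D b ≤ D a + 1)
    (hdesc : ∀ x, 0 < D x → ∃ y, G.Adj x y ∧ D y < D x) (x : V) :
    G.dist v x = D x := by
  have upper : ∀ k x, D x ≤ k → ∃ w : G.Walk v x, w.length ≤ D x := by
    intro k
    induction k with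
    | zero =>
        intro x hx
        have hx0 : D x = 0 := by omega
        rcases hv0 x hx0 with rfl
        exact ⟨.nil, by simp⟩
    | succ k ih =>
        intro x hx
        by_cases hx0 : D x = 0
        · rcases hv0 x hx0 with rfl
          exact ⟨.nil, by simp⟩
        · obtain ⟨y, hadj, hy⟩ := hdesc x (by omega)
          obtain ⟨w, hw⟩ := ih y (by omega)
          refine ⟨w.concat hadj.symm, ?_⟩
          rw [SimpleGraph.Walk.length_concat]
          omega
  obtain ⟨w, hw⟩ := upper (D x) x le_rfl
  have h1 : G.dist v x ≤ D x := le_trans (SimpleGraph.dist_le w) hw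
  obtain ⟨p, hp⟩ := (SimpleGraph.Reachable.exists_walk_length_eq_dist ⟨w⟩)
  have h2 := walk_lower G D hlip p
  omega

section ValLemmas

variable {n : ℕ} (hn : 13 ≤ n)

lemma val_succ' (j : ZMod n) (hn : 13 ≤ n) :
    (j + 1).val = j.val + 1 ∨ (j.val + 1 = n ∧ (j + 1).val = 0) := by
  haveI : NeZero n := ⟨by omega⟩
  have h1 : (1 : ZMod n).val = 1 := by
    rw [← Nat.cast_one, ZMod.val_natCast, Nat.mod_eq_of_lt (by omega)]
  have hv : j.val < n := ZMod.val_lt j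
  rw [ZMod.val_add, h1]
  rcases Nat.lt_or_ge (j.val + 1) n with h | h
  · exact Or.inl (Nat.mod_eq_of_lt h)
  · have he : j.val + 1 = n := by omega
    right
    rw [he, Nat.mod_self]
    exact ⟨rfl, rfl⟩

lemma val_add3' (j : ZMod n) (hn : 13 ≤ n) :
    (j + ((3 : ℕ) : ZMod n)).val = j.val + 3 ∨
      (n ≤ j.val + 3 ∧ (j + ((3 : ℕ) : ZMod n)).val = j.val + 3 - n) := by
  haveI : NeZero n := ⟨by omega⟩
  have h1 : (((3 : ℕ) : ZMod n)).val = 3 := by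
    rw [ZMod.val_natCast, Nat.mod_eq_of_lt (by omega)]
  have hv : j.val < n := ZMod.val_lt j
  rw [ZMod.val_add, h1]
  rcases Nat.lt_or_ge (j.val + 3) n with h | h
  · exact Or.inl (Nat.mod_eq_of_lt h)
  · right
    refine ⟨h, ?_⟩
    rw [Nat.mod_eq_sub_mod h, Nat.mod_eq_of_lt (by omega)]

end ValLemmas

section AdjLemmas

variable {n : ℕ}

lemma adj_uu (hn : 13 ≤ n) (j : ZMod n) : (GP n 3).Adj (pu j) (pu (j + 1)) := by
  haveI : NeZero n := ⟨by omega⟩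
  rw [GP, SimpleGraph.fromRel_adj]
  refine ⟨?_, Or.inl (Or.inl ⟨j, rfl, rfl⟩)⟩
  intro h
  have hj : j = j + 1 := by
    simpa [pu] using h
  have := val_succ' j hn
  have hv : j.val < n := ZMod.val_lt j
  rw [← hj] at this
  omega

lemma adj_vv (hn : 13 ≤ n) (j : ZMod n) :
    (GP n 3).Adj (pv j) (pv (j + ((3 : ℕ) : ZMod n))) := by
  haveI : NeZero n := ⟨by omega⟩
  rw [GP, SimpleGraph.fromRel_adj]
  refine ⟨?_, Or.inl (Or.inr (Or.inl ⟨j, rfl, rfl⟩))⟩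
  intro h
  have hj : j = j + ((3 : ℕ) : ZMod n) := by
    simpa [pv] using h
  have := val_add3' j hn
  have hv : j.val < n := ZMod.val_lt j
  rw [← hj] at this
  omega

lemma adj_uv (j : ZMod n) :
    (GP n 3).Adj (pu j) (pv j) := by
  rw [GP, SimpleGraph.fromRel_adj]
  exact ⟨by simp [pu, pv], Or.inl (Or.inr (Or.inr ⟨j, rfl, rfl⟩))⟩

end AdjLemmas

/-! ### Arithmetic lemmas (verified by `omega`) -/

section Arith

-- Lipschitz along an outer edge (both directions).
lemma ar_uu {n m a : ℕ} (hn : 13 ≤ n) (hm : m < n) (ha : a < n)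
    (h : a = m + 1 ∨ (m + 1 = n ∧ a = 0)) :
    min (fU a) (fU (n - a)) ≤ min (fU m) (fU (n - m)) + 1 ∧
      min (fU m) (fU (n - m)) ≤ min (fU a) (fU (n - a)) + 1 := by
  simp only [fU]
  rcases h with rfl | ⟨h1, rfl⟩ <;> constructor <;> omega

-- Lipschitz along an inner edge (both directions).
lemma ar_vv {n m a : ℕ} (hn : 13 ≤ n) (hm : m < n) (ha : a < n)
    (h : a = m + 3 ∨ (n ≤ m + 3 ∧ a = m + 3 - n)) :
    min (fV a) (fV (n - a)) ≤ min (fV m) (fV (n - m)) + 1 ∧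
      min (fV m) (fV (n - m)) ≤ min (fV a) (fV (n - a)) + 1 := by
  simp only [fV]
  obtain ⟨q1, r1, e1, e1', f1, g1⟩ := flat3 m
  obtain ⟨q2, r2, e2, e2', f2, g2⟩ := flat3 (n - m)
  obtain ⟨q3, r3, e3, e3', f3, g3⟩ := flat3 a
  obtain ⟨q4, r4, e4, e4', f4, g4⟩ := flat3 (n - a)
  rw [e1, e1', e2, e2', e3, e3', e4, e4']
  clear e1 e1' e2 e2' e3 e3' e4 e4'
  rw [show min (q1 + r1 + 2 * ((r1 + 2) / 3)) (q2 + r2 + 2 * ((r2 + 2) / 3)) + 1 =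
      min (q1 + r1 + 2 * ((r1 + 2) / 3) + 1) (q2 + r2 + 2 * ((r2 + 2) / 3) + 1) from
    (Nat.succ_min_succ _ _).symm]
  rw [show min (q3 + r3 + 2 * ((r3 + 2) / 3)) (q4 + r4 + 2 * ((r4 + 2) / 3)) + 1 =
      min (q3 + r3 + 2 * ((r3 + 2) / 3) + 1) (q4 + r4 + 2 * ((r4 + 2) / 3) + 1) from
    (Nat.succ_min_succ _ _).symm]
  simp only [min_le_iff, le_min_iff]
  rcases (show r1 = 0 ∨ r1 = 1 ∨ r1 = 2 by omega) with rfl|rfl|rfl <;>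
  rcases (show r2 = 0 ∨ r2 = 1 ∨ r2 = 2 by omega) with rfl|rfl|rfl <;>
  rcases (show r3 = 0 ∨ r3 = 1 ∨ r3 = 2 by omega) with rfl|rfl|rfl <;>
  rcases (show r4 = 0 ∨ r4 = 1 ∨ r4 = 2 by omega) with rfl|rfl|rfl <;>
  rcases h with rfl | ⟨h1, rfl⟩ <;> constructor <;> constructor <;> omega

-- Lipschitz along a spoke (both directions).
lemma ar_uv {n m : ℕ} (hn : 13 ≤ n) (hm : m < n) :
    min (fV m) (fV (n - m)) ≤ min (fU m) (fU (n - m)) + 1 ∧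
      min (fU m) (fU (n - m)) ≤ min (fV m) (fV (n - m)) + 1 := by
  simp only [fU, fV]
  constructor <;> omega

-- Descent at an outer vertex.
lemma ar_desc_u {n m a b : ℕ} (hn : 13 ≤ n) (hm : m < n)
    (ha : a = m + 1 ∨ (m + 1 = n ∧ a = 0))
    (hb : m = b + 1 ∨ (b + 1 = n ∧ m = 0)) :
    min (fV m) (fV (n - m)) < min (fU m) (fU (n - m)) ∨
      min (fU a) (fU (n - a)) < min (fU m) (fU (n - m)) ∨
      min (fU b) (fU (n - b)) < min (fU m) (fU (n - m)) := by
  simp only [fU, fV]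
  rcases ha with rfl | ⟨ha1, rfl⟩ <;> rcases hb with rfl | ⟨hb1, hb2⟩ <;> omega

lemma fV_add3 (x : ℕ) : fV (x + 3) = fV x + 1 := by simp only [fV]; omega

lemma fU_lt_fV {x : ℕ} (h : x % 3 ≠ 0) : fU x + 1 = fV x := by simp only [fU, fV]; omega

-- Descent at an inner vertex.
lemma ar_desc_v {n m a b : ℕ} (hn : 13 ≤ n) (hm : m < n)
    (hpos : 0 < min (fV m) (fV (n - m)))
    (ha : a = m + 3 ∨ (n ≤ m + 3 ∧ a = m + 3 - n))
    (hb : m = b + 3 ∨ (n ≤ b + 3 ∧ m = b + 3 - n)) (hbn : b < n) (han : a < n) :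
    min (fU m) (fU (n - m)) < min (fV m) (fV (n - m)) ∨
      min (fV a) (fV (n - a)) < min (fV m) (fV (n - m)) ∨
      min (fV b) (fV (n - b)) < min (fV m) (fV (n - m)) := by
  have h00 : fV 0 = 0 := by simp [fV]
  have hm0 : m ≠ 0 := by
    rintro rfl
    have hle := min_le_left (fV 0) (fV (n - 0))
    omega
  rcases le_or_gt (fV m) (fV (n - m)) with hc | hc
  · by_cases hr : m % 3 = 0
    · have h3 : 3 ≤ m := by omega
      have hb' : m = b + 3 := by
        rcases hb with h | h
        · exact h
        · omega
      right; right
      have key := fV_add3 b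
      rw [← hb'] at key
      have h1 : min (fV b) (fV (n - b)) ≤ fV b := min_le_left _ _
      have h2 : min (fV m) (fV (n - m)) = fV m := min_eq_left hc
      omega
    · left
      have key := fU_lt_fV hr
      have h1 : min (fU m) (fU (n - m)) ≤ fU m := min_le_left _ _
      have h2 : min (fV m) (fV (n - m)) = fV m := min_eq_left hc
      omega
  · have h2 : min (fV m) (fV (n - m)) = fV (n - m) := min_eq_right hc.le
    by_cases hr : (n - m) % 3 = 0
    · have h3 : 3 ≤ n - m := by omega
      right; left
      rcases Nat.lt_or_ge (m + 3) n with hlt | hge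
      · have ha' : a = m + 3 := by
          rcases ha with h | h
          · exact h
          · omega
        have key := fV_add3 (n - m - 3)
        rw [show n - m - 3 + 3 = n - m by omega] at key
        have h1 : min (fV a) (fV (n - a)) ≤ fV (n - a) := min_le_right _ _
        have heq : fV (n - a) = fV (n - m - 3) := by
          rw [show n - a = n - m - 3 by omega]
        omega
      · have ha0 : a = 0 := by rcases ha with h | h <;> omega
        rw [ha0]
        have h1 : min (fV 0) (fV (n - 0)) ≤ fV 0 := min_le_left _ _
        omega
    · left
      have key := fU_lt_fV hr
      have h1 : min (fU m) (fU (n - m)) ≤ fU (n - m) := min_le_right _ _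
      omega

end Arith

/-! ### The distance function -/

lemma DD_lip {n : ℕ} (hn : 13 ≤ n) :
    ∀ a b, (GP n 3).Adj a b → DD n b ≤ DD n a + 1 := by
  haveI : NeZero n := ⟨by omega⟩
  have huu : ∀ j : ZMod n, DD n (pu (j + 1)) ≤ DD n (pu j) + 1 ∧
      DD n (pu j) ≤ DD n (pu (j + 1)) + 1 := by
    intro j
    have h := val_succ' j hn
    have h1 := ZMod.val_lt j
    have h2 := ZMod.val_lt (j + 1)
    simpa only [DD, pu, Sum.elim_inl] using
      ar_uu hn h1 h2 (by omega)
  have hvv : ∀ j : ZMod n, DD n (pv (j + ((3 : ℕ) : ZMod n))) ≤ DD n (pv j) + 1 ∧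
      DD n (pv j) ≤ DD n (pv (j + ((3 : ℕ) : ZMod n))) + 1 := by
    intro j
    have h := val_add3' j hn
    have h1 := ZMod.val_lt j
    have h2 := ZMod.val_lt (j + ((3 : ℕ) : ZMod n))
    simpa only [DD, pv, Sum.elim_inr] using
      ar_vv hn h1 h2 (by omega)
  have huv : ∀ j : ZMod n, DD n (pv j) ≤ DD n (pu j) + 1 ∧
      DD n (pu j) ≤ DD n (pv j) + 1 := by
    intro j
    have h1 := ZMod.val_lt j
    simpa only [DD, pu, pv, Sum.elim_inl, Sum.elim_inr] using ar_uv hn h1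
  intro a b hab
  rw [GP, SimpleGraph.fromRel_adj] at hab
  obtain ⟨-, h | h⟩ := hab <;>
    rcases h with ⟨j, rfl, rfl⟩ | ⟨j, rfl, rfl⟩ | ⟨j, rfl, rfl⟩
  · exact (huu j).1
  · exact (hvv j).1
  · exact (huv j).1
  · exact (huu j).2
  · exact (hvv j).2
  · exact (huv j).2

lemma DD_zero {n : ℕ} (hn : 13 ≤ n) : DD n (pv 0) = 0 := by
  haveI : NeZero n := ⟨by omega⟩
  simp only [DD, pv, Sum.elim_inr, ZMod.val_zero, fV]
  omega

lemma DD_eq_zero {n : ℕ} (hn : 13 ≤ n) : ∀ x : GPVert n, DD n x = 0 → x = pv 0 := by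
  haveI : NeZero n := ⟨by omega⟩
  intro x hx
  rcases x with j | j
  · exfalso
    have h1 := ZMod.val_lt j
    simp only [DD, Sum.elim_inl, fU] at hx
    omega
  · have h1 := ZMod.val_lt j
    simp only [DD, Sum.elim_inr, fV] at hx
    have hj : j.val = 0 := by omega
    have : j = 0 := by
      have := (ZMod.val_eq_zero j).mp hj
      exact this
    rw [this]; rfl

lemma DD_desc {n : ℕ} (hn : 13 ≤ n) :
    ∀ x : GPVert n, 0 < DD n x → ∃ y, (GP n 3).Adj x y ∧ DD n y < DD n x := by
  haveI : NeZero n := ⟨by omega⟩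
  intro x hx
  rcases x with j | j
  · -- outer vertex u_j
    have ha := val_succ' j hn
    have hb := val_succ' (j - 1) hn
    rw [sub_add_cancel] at hb
    have h1 := ZMod.val_lt j
    have key := ar_desc_u (a := (j + 1).val) (b := (j - 1).val) hn h1 ha hb
    rcases key with k | k | k
    · exact ⟨pv j, adj_uv j, by
        simpa only [DD, pu, pv, Sum.elim_inl, Sum.elim_inr] using k⟩
    · exact ⟨pu (j + 1), adj_uu hn j, by
        simpa only [DD, pu, Sum.elim_inl] using k⟩
    · refine ⟨pu (j - 1), ?_, by
        simpa only [DD, pu, Sum.elim_inl] using k⟩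
      have := (adj_uu hn (j - 1)).symm
      rwa [sub_add_cancel] at this
  · -- inner vertex v_j
    have ha := val_add3' j hn
    have hb := val_add3' (j - ((3 : ℕ) : ZMod n)) hn
    rw [sub_add_cancel] at hb
    have h1 := ZMod.val_lt j
    have h2 := ZMod.val_lt (j - ((3 : ℕ) : ZMod n))
    have hx' : 0 < min (fV j.val) (fV (n - j.val)) := by
      simpa only [DD, Sum.elim_inr] using hx
    have key := ar_desc_v (a := (j + ((3 : ℕ) : ZMod n)).val)
      (b := (j - ((3 : ℕ) : ZMod n)).val) hn h1 hx' ha hb h2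
      (ZMod.val_lt _)
    rcases key with k | k | k
    · exact ⟨pu j, (adj_uv j).symm, by
        simpa only [DD, pu, pv, Sum.elim_inl, Sum.elim_inr] using k⟩
    · exact ⟨pv (j + ((3 : ℕ) : ZMod n)), adj_vv hn j, by
        simpa only [DD, pv, Sum.elim_inr] using k⟩
    · refine ⟨pv (j - ((3 : ℕ) : ZMod n)), ?_, by
        simpa only [DD, pv, Sum.elim_inr] using k⟩
      have := (adj_vv hn (j - ((3 : ℕ) : ZMod n))).symm
      rwa [sub_add_cancel] at this

lemma dist_pu {n : ℕ} (hn : 13 ≤ n) (j : ZMod n) :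
    (GP n 3).dist (pv 0) (pu j) = min (fU j.val) (fU (n - j.val)) := by
  haveI : NeZero n := ⟨by omega⟩
  have := dist_eq_of (GP n 3) (pv 0) (DD n) (DD_zero hn) (DD_eq_zero hn)
    (DD_lip hn) (DD_desc hn) (pu j)
  simpa only [DD, pu, Sum.elim_inl] using this

/-- The distance from `v_0` to the outer edge `e_i^u = u_i u_{i+1}` in `P(n,3)`, `n ≥ 13`. -/
theorem dist_v0_outer_edge (n i : ℕ) (hn : 13 ≤ n) (hi : i ≤ n - 1) :
    (edist (GP n 3) (pv 0) s(pu (i : ZMod n), pu ((i : ZMod n) + 1)) : ℤ) =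
      if r3 i = 0 ∨ (r3 n = 0 ∧ r3 i = 2) then
        min (q3 i + r3 i / 2 + 1) (q3 n - q3 i + r3 n / 2 - r3 i / 2 + 1)
      else
        min (q3 i + 2) (q3 n - q3 i + 1) := by
  haveI : NeZero n := ⟨by omega⟩
  have hi' : i < n := by omega
  have h1 : (i : ZMod n).val = i := by
    rw [ZMod.val_natCast, Nat.mod_eq_of_lt hi']
  have hsucc := val_succ' (i : ZMod n) hn
  rw [h1] at hsucc
  have d1 := dist_pu hn (i : ZMod n)
  have d2 := dist_pu hn ((i : ZMod n) + 1)
  rw [h1] at d1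
  simp only [_root_.edist, Sym2.lift_mk]
  rw [d1, d2]
  set a := ((i : ZMod n) + 1).val with ha
  -- pure arithmetic from here
  simp only [fU, q3, r3]
  obtain ⟨q1, r1, e1, e1', f1, g1⟩ := flat3 i
  obtain ⟨q2, r2, e2, e2', f2, g2⟩ := flat3 (n - i)
  obtain ⟨qa, ra, e3, e3', f3, g3⟩ := flat3 a
  obtain ⟨q4, r4, e4, e4', f4, g4⟩ := flat3 (n - a)
  obtain ⟨q5, r5, e5, e5', f5, g5⟩ := flat3 n
  rw [e1, e1', e2, e2', e3, e3', e4, e4']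
  have z1 : (i : ℤ) / 3 = q1 := by omega
  have z2 : (i : ℤ) % 3 = r1 := by omega
  have z3 : (n : ℤ) / 3 = q5 := by omega
  have z4 : (n : ℤ) % 3 = r5 := by omega
  simp only [z1, z2, z3, z4]
  split_ifs with h
  · have h1n : r1 = 0 ∨ (r5 = 0 ∧ r1 = 2) := by omega
    clear h
    rcases hsucc with hs | ⟨hs1, hs2⟩ <;> rcases h1n with h | ⟨h5, h⟩ <;>
      subst h <;> (try subst h5) <;> omega
  · have h1n : ¬(r1 = 0 ∨ (r5 = 0 ∧ r1 = 2)) := by omega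
    clear h
    have h1n' : r1 = 1 ∨ (r1 = 2 ∧ (r5 = 1 ∨ r5 = 2)) := by omega
    rcases hsucc with hs | ⟨hs1, hs2⟩ <;>
      rcases h1n' with h | ⟨h, h5 | h5⟩ <;> subst h <;> (try subst h5) <;> omega
end

section
/- Let n ≥ 13 and let i be an integer with 0 ≤ i ≤ ⌊n/2⌋. In the graph P(n,3), the vertex distance satisfies: d(u_0, v_i) = q_i + r_i if (r_n', i) = (5, ⌊n/2⌋), and d(u_0, v_i) = q_i + r_i + 1 otherwise. -/
open SimpleGraph

section Aux

variable {n : ℕ}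

def gpos {n : ℕ} : GPVert n → ZMod n := Sum.elim id id
def gside {n : ℕ} : GPVert n → Bool := Sum.elim (fun _ => false) (fun _ => true)

lemma cast_ne_zero (hn : 13 ≤ n) {m : ℕ} (hm : 0 < m) (hm' : m < n) :
    ((m : ZMod n)) ≠ 0 := by
  haveI : NeZero n := ⟨by omega⟩
  intro h
  rw [ZMod.natCast_eq_zero_iff] at h
  have := Nat.le_of_dvd hm h
  omega

lemma walk_outer (hn : 13 ≤ n) (j : ZMod n) (t : ℕ) :
    ∃ w : (GP n 3).Walk (pu j) (pu (j + (t : ZMod n))), w.length = t := by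
  induction t with
  | zero => exact ⟨Walk.nil.copy rfl (by push_cast; ring_nf), by simp⟩
  | succ t ih =>
    obtain ⟨w, hw⟩ := ih
    refine ⟨(w.concat (adj_uu hn _)).copy rfl (by push_cast; ring), ?_⟩
    simp [Walk.length_concat, hw]

lemma walk_inner_add (hn : 13 ≤ n) (j : ZMod n) (t : ℕ) :
    ∃ w : (GP n 3).Walk (pv j) (pv (j + ((3 * t : ℕ) : ZMod n))), w.length = t := by
  induction t with
  | zero => exact ⟨Walk.nil.copy rfl (by push_cast; ring_nf), by simp⟩
  | succ t ih =>
    obtain ⟨w, hw⟩ := ih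
    refine ⟨(w.concat (adj_vv hn _)).copy rfl (by push_cast; ring), ?_⟩
    simp [Walk.length_concat, hw]

lemma walk_inner_sub (hn : 13 ≤ n) (j : ZMod n) (t : ℕ) :
    ∃ w : (GP n 3).Walk (pv j) (pv (j - ((3 * t : ℕ) : ZMod n))), w.length = t := by
  induction t with
  | zero => exact ⟨Walk.nil.copy rfl (by push_cast; ring_nf), by simp⟩
  | succ t ih =>
    obtain ⟨w, hw⟩ := ih
    have hadj : (GP n 3).Adj (pv (j - ((3 * t : ℕ) : ZMod n)))
        (pv (j - ((3 * (t + 1) : ℕ) : ZMod n))) := by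
      have := (adj_vv hn (j - ((3 * (t + 1) : ℕ) : ZMod n))).symm
      have he : j - ((3 * (t + 1) : ℕ) : ZMod n) + ((3 : ℕ) : ZMod n)
          = j - ((3 * t : ℕ) : ZMod n) := by push_cast; ring
      rwa [he] at this
    refine ⟨w.concat hadj, ?_⟩
    simp [Walk.length_concat, hw]

lemma walk_invariant (hn : 13 ≤ n) {x y : GPVert n} (w : (GP n 3).Walk x y) :
    ∃ a b : ℤ, gpos y - gpos x = ((a + 3 * b : ℤ) : ZMod n) ∧
      a.natAbs + b.natAbs + (if gside x = gside y then 0 else 1) ≤ w.length := by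
  induction w with
  | nil => exact ⟨0, 0, by push_cast; ring, by simp⟩
  | @cons x z y h p ih =>
    obtain ⟨a, b, hab, hlen⟩ := ih
    rw [GP, fromRel_adj] at h
    obtain ⟨hne, hrel⟩ := h
    rw [Walk.length_cons]
    rcases hrel with (⟨j, rfl, rfl⟩ | ⟨j, rfl, rfl⟩ | ⟨j, rfl, rfl⟩) |
      (⟨j, rfl, rfl⟩ | ⟨j, rfl, rfl⟩ | ⟨j, rfl, rfl⟩)
    · refine ⟨a + 1, b, ?_, ?_⟩
      · simp only [gpos, pu, Sum.elim_inl, id] at hab ⊢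
        push_cast at hab ⊢
        linear_combination hab
      · simp only [gside, pu, Sum.elim_inl] at hlen ⊢
        cases y <;> simp at hlen ⊢ <;> omega
    · refine ⟨a, b + 1, ?_, ?_⟩
      · simp only [gpos, pv, Sum.elim_inr, id] at hab ⊢
        push_cast at hab ⊢
        linear_combination hab
      · simp only [gside, pv, Sum.elim_inr] at hlen ⊢
        cases y <;> simp at hlen ⊢ <;> omega
    · refine ⟨a, b, ?_, ?_⟩
      · simp only [gpos, pu, pv, Sum.elim_inl, Sum.elim_inr, id] at hab ⊢
        push_cast at hab ⊢
        linear_combination hab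
      · simp only [gside, pu, pv, Sum.elim_inl, Sum.elim_inr] at hlen ⊢
        cases y <;> simp at hlen ⊢ <;> omega
    · refine ⟨a - 1, b, ?_, ?_⟩
      · simp only [gpos, pu, Sum.elim_inl, id] at hab ⊢
        push_cast at hab ⊢
        linear_combination hab
      · simp only [gside, pu, Sum.elim_inl] at hlen ⊢
        cases y <;> simp at hlen ⊢ <;> omega
    · refine ⟨a, b - 1, ?_, ?_⟩
      · simp only [gpos, pv, Sum.elim_inr, id] at hab ⊢
        push_cast at hab ⊢
        linear_combination hab
      · simp only [gside, pv, Sum.elim_inr] at hlen ⊢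
        cases y <;> simp at hlen ⊢ <;> omega
    · refine ⟨a, b, ?_, ?_⟩
      · simp only [gpos, pu, pv, Sum.elim_inl, Sum.elim_inr, id] at hab ⊢
        push_cast at hab ⊢
        linear_combination hab
      · simp only [gside, pu, pv, Sum.elim_inl, Sum.elim_inr] at hlen ⊢
        cases y <;> simp at hlen ⊢ <;> omega

end Aux

/-- Distance from `u_0` to `v_i` in `P(n,3)` for `0 ≤ i ≤ ⌊n/2⌋`, `n ≥ 13`. -/
theorem dist_u0_vi (n i : ℕ) (hn : 13 ≤ n) (hi : i ≤ n / 2) :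
    ((GP n 3).dist (pu 0) (pv (i : ZMod n)) : ℤ) =
      if n % 6 = 5 ∧ i = n / 2 then q3 i + r3 i
      else q3 i + r3 i + 1 := by
  haveI : NeZero n := ⟨by omega⟩
  set q : ℕ := i / 3 with hq
  set r : ℕ := i % 3 with hr
  -- upper bound walk
  have hup : ∃ w : (GP n 3).Walk (pu 0) (pv (i : ZMod n)),
      (if n % 6 = 5 ∧ i = n / 2 then w.length = q + r else w.length = q + r + 1) := by
    split_ifs with hcase
    · -- exceptional: spoke then q+1 inner steps backwards
      obtain ⟨w, hw⟩ := walk_inner_sub hn (0 : ZMod n) (q + 1)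
      have he : (0 : ZMod n) - ((3 * (q + 1) : ℕ) : ZMod n) = (i : ZMod n) := by
        have hni : ((i + 3 * (q + 1) : ℕ) : ZMod n) = 0 := by
          rw [show i + 3 * (q + 1) = n by omega]
          exact ZMod.natCast_self n
        push_cast at hni ⊢
        linear_combination -hni
      refine ⟨(Walk.cons (adj_uv 0) w).copy rfl (by rw [he]), ?_⟩
      have hr2 : r = 2 := by omega
      simp [Walk.length_cons, hw]
      omega
    · -- normal: r outer steps, spoke, q inner steps forward
      obtain ⟨w1, hw1⟩ := walk_outer hn (0 : ZMod n) r
      obtain ⟨w2, hw2⟩ := walk_inner_add hn ((0 : ZMod n) + (r : ZMod n)) q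
      have he : (0 : ZMod n) + (r : ZMod n) + ((3 * q : ℕ) : ZMod n) = (i : ZMod n) := by
        rw [show i = r + 3 * q by omega]
        push_cast
        ring
      refine ⟨(w1.append (Walk.cons (adj_uv _) w2)).copy rfl (by rw [he]), ?_⟩
      simp [Walk.length_append, Walk.length_cons, hw1, hw2]
      omega
  obtain ⟨w, hwlen⟩ := hup
  have hreach : (GP n 3).Reachable (pu 0) (pv (i : ZMod n)) := ⟨w⟩
  obtain ⟨p, hp⟩ := hreach.exists_walk_length_eq_dist
  obtain ⟨a, b, hab, hlen⟩ := walk_invariant hn p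
  have hside : (if gside (pu (0 : ZMod n)) = gside (pv (i : ZMod n)) then 0 else 1) = 1 := by
    simp [gside, pu, pv]
  rw [hside, hp] at hlen
  have hdvd : (n : ℤ) ∣ (a + 3 * b - i) := by
    rw [← ZMod.intCast_zmod_eq_zero_iff_dvd]
    have : gpos (pv (i : ZMod n)) - gpos (pu (0 : ZMod n)) = (i : ZMod n) := by
      simp [gpos, pu, pv]
    rw [this] at hab
    push_cast
    push_cast at hab
    linear_combination -hab
  obtain ⟨c, hc⟩ := hdvd
  have hub : (GP n 3).dist (pu 0) (pv (i : ZMod n)) ≤ w.length := SimpleGraph.dist_le w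
  -- bound n*c
  have hm : (n : ℤ) * c = 0 ∨ (n : ℤ) * c = -(n : ℤ) ∨
      (n : ℤ) ≤ (n : ℤ) * c ∨ (n : ℤ) * c ≤ -2 * n := by
    have hn' : (0 : ℤ) < n := by positivity
    rcases le_or_gt 1 c with h1 | h1
    · right; right; left; nlinarith
    rcases le_or_gt c (-2) with h2 | h2
    · right; right; right; nlinarith
    interval_cases c
    · right; left; ring
    · left; ring
  set D := (GP n 3).dist (pu 0) (pv (i : ZMod n)) with hD
  split_ifs at hwlen ⊢ with hcase <;>
    simp only [q3, r3] <;>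
    rcases hm with hm | hm | hm | hm <;>
    omega
end
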